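/- Let k be a field, S = k[x,y,z], and I = (z³, xyz, x³y, x⁴, y⁶, y⁵z, xy⁵). Set J = (x⁴, y⁶, z³) : I. Then (x⁴, y⁶, z³) : J = I and (x⁴, y⁵, z³) : J = (xz, x³, y⁴z, xy⁴, z³, y⁵); that is, I is doubly linked, via the monomial regular sequences x⁴, y⁶, z³ and x⁴, y⁵, z³, to the ideal I' = (xz, x³, y⁴z, xy⁴, z³, y⁵). -/

import Mathlib

set_option maxHeartbeats 1000000

open MvPolynomial

namespace DoubleLinkAux

/-- exponent vector (a,b,c) in `Fin 3 →₀ ℕ`. -/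
noncomputable def v (a b c : ℕ) : Fin 3 →₀ ℕ :=
  Finsupp.single 0 a + Finsupp.single 1 b + Finsupp.single 2 c

@[simp] lemma v_apply0 (a b c : ℕ) : v a b c 0 = a := by
  simp [v, Finsupp.single_apply]

@[simp] lemma v_apply1 (a b c : ℕ) : v a b c 1 = b := by
  simp [v, Finsupp.single_apply]

@[simp] lemma v_apply2 (a b c : ℕ) : v a b c 2 = c := by
  simp [v, Finsupp.single_apply]

lemma le3 (u w : Fin 3 →₀ ℕ) : u ≤ w ↔ u 0 ≤ w 0 ∧ u 1 ≤ w 1 ∧ u 2 ≤ w 2 := by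
  rw [Finsupp.le_def]
  constructor
  · intro h; exact ⟨h 0, h 1, h 2⟩
  · rintro ⟨h0, h1, h2⟩ i; fin_cases i <;> assumption

variable {k : Type*} [Field k]

/-- span of a set of monomials with exponents in `S`. -/
noncomputable def spanMon (S : Set (Fin 3 →₀ ℕ)) : Ideal (MvPolynomial (Fin 3) k) :=
  Ideal.span ((fun s => monomial s (1 : k)) '' S)

lemma mem_spanMon {S : Set (Fin 3 →₀ ℕ)} {f : MvPolynomial (Fin 3) k} :
    f ∈ (spanMon S : Ideal (MvPolynomial (Fin 3) k)) ↔
      ∀ d ∈ f.support, ∃ s ∈ S, s ≤ d :=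
  mem_ideal_span_monomial_image

lemma mul_monomial_mem_spanMon {S : Set (Fin 3 →₀ ℕ)} {e : Fin 3 →₀ ℕ}
    {f : MvPolynomial (Fin 3) k} :
    f * monomial e 1 ∈ (spanMon S : Ideal (MvPolynomial (Fin 3) k)) ↔
      ∀ d ∈ f.support, ∃ s ∈ S, s ≤ d + e := by
  rw [mem_spanMon]
  constructor
  · intro h d hd
    refine h (d + e) ?_
    rw [mem_support_iff, coeff_mul_monomial, mul_one]
    exact mem_support_iff.mp hd
  · intro h d' hd'
    rw [mem_support_iff, coeff_mul_monomial'] at hd'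
    by_cases he : e ≤ d'
    · rw [if_pos he, mul_one] at hd'
      obtain ⟨s, hs, hle⟩ := h (d' - e) (mem_support_iff.mpr hd')
      refine ⟨s, hs, ?_⟩
      rwa [tsub_add_cancel_of_le he] at hle
    · rw [if_neg he] at hd'
      exact absurd rfl hd'

lemma mem_colon_span {R : Type*} [CommRing R] (M : Ideal R) (T : Set R) (f : R) :
    f ∈ M.colon (Ideal.span T) ↔ ∀ t ∈ T, f * t ∈ M := by
  constructor
  · intro h t ht
    simpa using Submodule.mem_colon.mp h t (Ideal.subset_span ht)
  · intro h
    rw [Submodule.mem_colon]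
    intro p hp
    have hsub : Ideal.span T ≤ M.colon (Ideal.span {f}) := by
      rw [Ideal.span_le]
      intro t ht
      rw [SetLike.mem_coe, Ideal.mem_colon_span_singleton, mul_comm]
      exact h t ht
    have := Ideal.mem_colon_span_singleton.mp (hsub hp)
    simpa [smul_eq_mul, mul_comm] using this

/-- membership in the colon of two monomial ideals. -/
lemma mem_colon_spanMon {A T : Set (Fin 3 →₀ ℕ)} {f : MvPolynomial (Fin 3) k} :
    f ∈ (spanMon A : Ideal (MvPolynomial (Fin 3) k)).colon (spanMon T : Ideal (MvPolynomial (Fin 3) k)) ↔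
      ∀ e ∈ T, ∀ d ∈ f.support, ∃ s ∈ A, s ≤ d + e := by
  rw [spanMon, spanMon, mem_colon_span, Set.forall_mem_image]
  exact forall₂_congr fun e _ => mul_monomial_mem_spanMon

end DoubleLinkAux

open DoubleLinkAux

/-- The ideal `I = (z³, xyz, x³y, x⁴, y⁶, y⁵z, xy⁵)` in `k[x,y,z]` is doubly linked, via
the monomial regular sequences `x⁴, y⁶, z³` and `x⁴, y⁵, z³`, to the ideal
`I' = (xz, x³, y⁴z, xy⁴, z³, y⁵)`: setting `J = (x⁴, y⁶, z³) : I`, one has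
`(x⁴, y⁶, z³) : J = I` and `(x⁴, y⁵, z³) : J = I'`. -/
theorem double_link_of_monomial_example {k : Type*} [Field k]
    (x y z : MvPolynomial (Fin 3) k) (hx : x = X 0) (hy : y = X 1) (hz : z = X 2)
    (I : Ideal (MvPolynomial (Fin 3) k))
    (hI : I = Ideal.span {z ^ 3, x * y * z, x ^ 3 * y, x ^ 4, y ^ 6, y ^ 5 * z, x * y ^ 5})
    (J : Ideal (MvPolynomial (Fin 3) k))
    (hJ : J = (Ideal.span {x ^ 4, y ^ 6, z ^ 3}).colon I) :
    (Ideal.span {x ^ 4, y ^ 6, z ^ 3}).colon J = I ∧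
    (Ideal.span {x ^ 4, y ^ 5, z ^ 3}).colon J =
      Ideal.span {x * z, x ^ 3, y ^ 4 * z, x * y ^ 4, z ^ 3, y ^ 5} := by
  classical
  subst hx hy hz
  have hmon : ∀ (a b c : ℕ),
      (X 0 : MvPolynomial (Fin 3) k) ^ a * X 1 ^ b * X 2 ^ c = monomial (v a b c) 1 := by
    intro a b c
    simp [X_pow_eq_monomial, monomial_mul, v]
  -- rewrite all generators as monomials
  have g1 : (X 2 : MvPolynomial (Fin 3) k) ^ 3 = monomial (v 0 0 3) 1 := by
    simpa using hmon 0 0 3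
  have g2 : (X 0 : MvPolynomial (Fin 3) k) * X 1 * X 2 = monomial (v 1 1 1) 1 := by
    simpa using hmon 1 1 1
  have g3 : (X 0 : MvPolynomial (Fin 3) k) ^ 3 * X 1 = monomial (v 3 1 0) 1 := by
    simpa using hmon 3 1 0
  have g4 : (X 0 : MvPolynomial (Fin 3) k) ^ 4 = monomial (v 4 0 0) 1 := by
    simpa using hmon 4 0 0
  have g5 : (X 1 : MvPolynomial (Fin 3) k) ^ 6 = monomial (v 0 6 0) 1 := by
    simpa using hmon 0 6 0
  have g6 : (X 1 : MvPolynomial (Fin 3) k) ^ 5 * X 2 = monomial (v 0 5 1) 1 := by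
    simpa using hmon 0 5 1
  have g7 : (X 0 : MvPolynomial (Fin 3) k) * X 1 ^ 5 = monomial (v 1 5 0) 1 := by
    simpa using hmon 1 5 0
  have g8 : (X 1 : MvPolynomial (Fin 3) k) ^ 5 = monomial (v 0 5 0) 1 := by
    simpa using hmon 0 5 0
  have g9 : (X 0 : MvPolynomial (Fin 3) k) * X 2 = monomial (v 1 0 1) 1 := by
    simpa using hmon 1 0 1
  have g10 : (X 0 : MvPolynomial (Fin 3) k) ^ 3 = monomial (v 3 0 0) 1 := by
    simpa using hmon 3 0 0
  have g11 : (X 1 : MvPolynomial (Fin 3) k) ^ 4 * X 2 = monomial (v 0 4 1) 1 := by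
    simpa using hmon 0 4 1
  have g12 : (X 0 : MvPolynomial (Fin 3) k) * X 1 ^ 4 = monomial (v 1 4 0) 1 := by
    simpa using hmon 1 4 0
  -- the generating exponent sets
  have hM : Ideal.span {(X 0 : MvPolynomial (Fin 3) k) ^ 4, X 1 ^ 6, X 2 ^ 3} =
      spanMon {v 4 0 0, v 0 6 0, v 0 0 3} := by
    rw [g4, g5, g1, spanMon]
    congr 1
    simp [Set.image_insert_eq]
  have hA : Ideal.span {(X 0 : MvPolynomial (Fin 3) k) ^ 4, X 1 ^ 5, X 2 ^ 3} =
      spanMon {v 4 0 0, v 0 5 0, v 0 0 3} := by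
    rw [g4, g8, g1, spanMon]
    congr 1
    simp [Set.image_insert_eq]
  have hIs : I = spanMon {v 0 0 3, v 1 1 1, v 3 1 0, v 4 0 0, v 0 6 0, v 0 5 1, v 1 5 0} := by
    rw [hI, g1, g2, g3, g4, g5, g6, g7, spanMon]
    congr 1
    simp [Set.image_insert_eq]
  have hI's : Ideal.span {(X 0 : MvPolynomial (Fin 3) k) * X 2, X 0 ^ 3, X 1 ^ 4 * X 2,
      X 0 * X 1 ^ 4, X 2 ^ 3, X 1 ^ 5} =
      spanMon {v 1 0 1, v 3 0 0, v 0 4 1, v 1 4 0, v 0 0 3, v 0 5 0} := by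
    rw [g9, g10, g11, g12, g1, g8, spanMon]
    congr 1
    simp [Set.image_insert_eq]
  have hJ' : J = (spanMon {v 4 0 0, v 0 6 0, v 0 0 3} :
      Ideal (MvPolynomial (Fin 3) k)).colon
      (spanMon {v 0 0 3, v 1 1 1, v 3 1 0, v 4 0 0, v 0 6 0, v 0 5 1, v 1 5 0} :
        Ideal (MvPolynomial (Fin 3) k)) := by
    rw [hJ, hM, hIs]
  -- the six monomial generators of J
  have hjmem : ∀ p : Fin 3 →₀ ℕ,
      (∀ e ∈ ({v 0 0 3, v 1 1 1, v 3 1 0, v 4 0 0, v 0 6 0, v 0 5 1, v 1 5 0} :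
        Set (Fin 3 →₀ ℕ)), ∃ s ∈ ({v 4 0 0, v 0 6 0, v 0 0 3} : Set (Fin 3 →₀ ℕ)),
          s ≤ p + e) →
      (monomial p 1 : MvPolynomial (Fin 3) k) ∈ J := by
    intro p hp
    rw [hJ', mem_colon_spanMon]
    intro e he d hd
    rw [support_monomial, if_neg (one_ne_zero)] at hd
    simp only [Finset.mem_singleton] at hd
    subst hd
    exact hp e he
  have hj1 : (monomial (v 0 0 3) 1 : MvPolynomial (Fin 3) k) ∈ J := by
    apply hjmem
    intro e he
    simp only [Set.mem_insert_iff, Set.mem_singleton_iff] at he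
    rcases he with rfl | rfl | rfl | rfl | rfl | rfl | rfl <;>
      simp only [Set.mem_insert_iff, Set.mem_singleton_iff, exists_eq_or_imp, exists_eq_left,
        le3, Finsupp.add_apply, v_apply0, v_apply1, v_apply2] <;> omega
  have hj2 : (monomial (v 0 5 0) 1 : MvPolynomial (Fin 3) k) ∈ J := by
    apply hjmem
    intro e he
    simp only [Set.mem_insert_iff, Set.mem_singleton_iff] at he
    rcases he with rfl | rfl | rfl | rfl | rfl | rfl | rfl <;>
      simp only [Set.mem_insert_iff, Set.mem_singleton_iff, exists_eq_or_imp, exists_eq_left,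
        le3, Finsupp.add_apply, v_apply0, v_apply1, v_apply2] <;> omega
  have hj3 : (monomial (v 1 1 2) 1 : MvPolynomial (Fin 3) k) ∈ J := by
    apply hjmem
    intro e he
    simp only [Set.mem_insert_iff, Set.mem_singleton_iff] at he
    rcases he with rfl | rfl | rfl | rfl | rfl | rfl | rfl <;>
      simp only [Set.mem_insert_iff, Set.mem_singleton_iff, exists_eq_or_imp, exists_eq_left,
        le3, Finsupp.add_apply, v_apply0, v_apply1, v_apply2] <;> omega
  have hj4 : (monomial (v 3 0 2) 1 : MvPolynomial (Fin 3) k) ∈ J := by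
    apply hjmem
    intro e he
    simp only [Set.mem_insert_iff, Set.mem_singleton_iff] at he
    rcases he with rfl | rfl | rfl | rfl | rfl | rfl | rfl <;>
      simp only [Set.mem_insert_iff, Set.mem_singleton_iff, exists_eq_or_imp, exists_eq_left,
        le3, Finsupp.add_apply, v_apply0, v_apply1, v_apply2] <;> omega
  have hj5 : (monomial (v 3 1 0) 1 : MvPolynomial (Fin 3) k) ∈ J := by
    apply hjmem
    intro e he
    simp only [Set.mem_insert_iff, Set.mem_singleton_iff] at he
    rcases he with rfl | rfl | rfl | rfl | rfl | rfl | rfl <;>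
      simp only [Set.mem_insert_iff, Set.mem_singleton_iff, exists_eq_or_imp, exists_eq_left,
        le3, Finsupp.add_apply, v_apply0, v_apply1, v_apply2] <;> omega
  have hj6 : (monomial (v 4 0 0) 1 : MvPolynomial (Fin 3) k) ∈ J := by
    apply hjmem
    intro e he
    simp only [Set.mem_insert_iff, Set.mem_singleton_iff] at he
    rcases he with rfl | rfl | rfl | rfl | rfl | rfl | rfl <;>
      simp only [Set.mem_insert_iff, Set.mem_singleton_iff, exists_eq_or_imp, exists_eq_left,
        le3, Finsupp.add_apply, v_apply0, v_apply1, v_apply2] <;> omega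
  constructor
  · -- (x⁴, y⁶, z³) : J = I
    apply le_antisymm
    · intro f hf
      rw [hM] at hf
      have key : ∀ p : Fin 3 →₀ ℕ, (monomial p 1 : MvPolynomial (Fin 3) k) ∈ J →
          ∀ d ∈ f.support, ∃ s ∈ ({v 4 0 0, v 0 6 0, v 0 0 3} : Set (Fin 3 →₀ ℕ)),
            s ≤ d + p := by
        intro p hp
        rw [← mul_monomial_mem_spanMon]
        simpa using Submodule.mem_colon.mp hf _ hp
      rw [hIs, mem_spanMon]
      intro d hd
      have h1 := key _ hj1 d hd
      have h2 := key _ hj2 d hd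
      have h3 := key _ hj3 d hd
      have h4 := key _ hj4 d hd
      have h5 := key _ hj5 d hd
      have h6 := key _ hj6 d hd
      simp only [Set.mem_insert_iff, Set.mem_singleton_iff, exists_eq_or_imp, exists_eq_left,
        le3, Finsupp.add_apply, v_apply0, v_apply1, v_apply2] at h1 h2 h3 h4 h5 h6 ⊢
      omega
    · -- I ≤ M : J = M : (M : I)
      rw [hJ]
      intro f hf
      rw [Submodule.mem_colon]
      intro p hp
      have := Submodule.mem_colon.mp hp f hf
      simpa [smul_eq_mul, mul_comm] using this
  · -- (x⁴, y⁵, z³) : J = I'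
    apply le_antisymm
    · intro f hf
      rw [hA] at hf
      have key : ∀ p : Fin 3 →₀ ℕ, (monomial p 1 : MvPolynomial (Fin 3) k) ∈ J →
          ∀ d ∈ f.support, ∃ s ∈ ({v 4 0 0, v 0 5 0, v 0 0 3} : Set (Fin 3 →₀ ℕ)),
            s ≤ d + p := by
        intro p hp
        rw [← mul_monomial_mem_spanMon]
        simpa using Submodule.mem_colon.mp hf _ hp
      rw [hI's, mem_spanMon]
      intro d hd
      have h1 := key _ hj1 d hd
      have h2 := key _ hj2 d hd
      have h3 := key _ hj3 d hd
      have h4 := key _ hj4 d hd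
      have h5 := key _ hj5 d hd
      have h6 := key _ hj6 d hd
      simp only [Set.mem_insert_iff, Set.mem_singleton_iff, exists_eq_or_imp, exists_eq_left,
        le3, Finsupp.add_apply, v_apply0, v_apply1, v_apply2] at h1 h2 h3 h4 h5 h6 ⊢
      omega
    · rw [hI's, hA, spanMon, Ideal.span_le]
      rintro _ ⟨q, hq, rfl⟩
      rw [SetLike.mem_coe, Submodule.mem_colon]
      intro f hf
      rw [hJ', SetLike.mem_coe, mem_colon_spanMon] at hf
      rw [smul_eq_mul, mul_comm, mul_monomial_mem_spanMon]
      intro d hd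
      have h1 := hf (v 0 0 3) (by simp) d hd
      have h2 := hf (v 1 1 1) (by simp) d hd
      have h3 := hf (v 3 1 0) (by simp) d hd
      have h4 := hf (v 4 0 0) (by simp) d hd
      have h5 := hf (v 0 6 0) (by simp) d hd
      have h6 := hf (v 0 5 1) (by simp) d hd
      have h7 := hf (v 1 5 0) (by simp) d hd
      simp only [Set.mem_insert_iff, Set.mem_singleton_iff, exists_eq_or_imp, exists_eq_left,
        le3, Finsupp.add_apply, v_apply0, v_apply1, v_apply2] at h1 h2 h3 h4 h5 h6 h7
      simp only [Set.mem_insert_iff, Set.mem_singleton_iff] at hq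
      rcases hq with rfl | rfl | rfl | rfl | rfl | rfl <;>
        simp only [Set.mem_insert_iff, Set.mem_singleton_iff, exists_eq_or_imp, exists_eq_left,
          le3, Finsupp.add_apply, v_apply0, v_apply1, v_apply2] <;>
        omega
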